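/- Let n ≥ 64 be an integer and let a_i/b_i and a_j/b_j, with indices i < j, be two fractions in the Farey sequence of order n whose denominators satisfy b_i ≤ n^{1/3} and b_j ≤ n^{1/3}. Then j − i > n/2. -/

import Mathlib

/-- The Farey fractions of order `n`: the rationals in `[0,1]` whose (reduced) denominator
is at most `n`. -/
def fareySet (n : ℕ) : Finset ℚ :=
  ((Finset.range (n + 1) ×ˢ Finset.range (n + 1)).image fun p => (p.1 : ℚ) / (p.2 : ℚ)).filter
    fun q => 0 ≤ q ∧ q ≤ 1 ∧ q.den ≤ n

/-- The Farey sequence of order `n`: the Farey fractions of order `n` listed in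
increasing order. -/
def fareyList (n : ℕ) : List ℚ := (fareySet n).sort (· ≤ ·)

/-- Two reduced fractions `q = a/b` and `q' = a'/b'` are similarly ordered if
`(a' - a) * (b' - b) ≥ 0`. -/
def SimilarlyOrdered (q q' : ℚ) : Prop :=
  0 ≤ (q'.num - q.num) * ((q'.den : ℤ) - (q.den : ℤ))

open Finset


/-- The lattice triangle `{(k,l) : 1 ≤ k, 1 ≤ l, B*k + C*l ≤ m}`. -/
def fTri (B C m : ℕ) : Finset (ℕ × ℕ) :=
  (Finset.range (m+1) ×ˢ Finset.range (m+1)).filter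
    (fun p => 1 ≤ p.1 ∧ 1 ≤ p.2 ∧ B * p.1 + C * p.2 ≤ m)

lemma mem_fTri {B C m : ℕ} (hB : 1 ≤ B) (hC : 1 ≤ C) {p : ℕ × ℕ} :
    p ∈ fTri B C m ↔ 1 ≤ p.1 ∧ 1 ≤ p.2 ∧ B * p.1 + C * p.2 ≤ m := by
  simp only [fTri, mem_filter, mem_product, mem_range]
  constructor
  · tauto
  · rintro ⟨h1, h2, h3⟩
    refine ⟨⟨?_, ?_⟩, h1, h2, h3⟩ <;> nlinarith

lemma fTri_card (B C m : ℕ) (hB : 1 ≤ B) (hC : 1 ≤ C) :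
    (fTri B C m).card = ∑ l ∈ Finset.Icc 1 ((m - B)/C), (m - C * l)/B := by
  rw [Finset.card_eq_sum_card_fiberwise (f := Prod.snd) (t := Finset.Icc 1 ((m - B)/C))]
  · refine Finset.sum_congr rfl (fun l hl => ?_)
    simp only [mem_Icc] at hl
    have hCl : C * l + B ≤ m := by
      have h := (Nat.le_div_iff_mul_le (by omega : 0 < C)).1 hl.2
      have h2 : l ≤ l * C := Nat.le_mul_of_pos_right l (by omega)
      have h3 : l * C = C * l := mul_comm _ _
      omega
    rw [show ((fTri B C m).filter (fun p => p.2 = l)) =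
        (Finset.Icc 1 ((m - C*l)/B)).image (fun k => (k, l)) from ?_]
    · rw [Finset.card_image_of_injective _ (fun a b h => by simpa using h)]
      simp
    · ext p
      simp only [mem_filter, mem_fTri hB hC, mem_image, mem_Icc]
      constructor
      · rintro ⟨⟨h1, h2, h3⟩, rfl⟩
        refine ⟨p.1, ⟨h1, (Nat.le_div_iff_mul_le (by omega : 0 < B)).2 ?_⟩, rfl⟩
        have : p.1 * B = B * p.1 := mul_comm _ _
        omega
      · rintro ⟨k, ⟨hk1, hk2⟩, rfl⟩
        have h := (Nat.le_div_iff_mul_le (by omega : 0 < B)).1 hk2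
        have h3 : k * B = B * k := mul_comm _ _
        refine ⟨⟨hk1, by omega, ?_⟩, rfl⟩
        show B * k + C * l ≤ m
        omega
  · intro p hp
    rw [Finset.mem_coe, mem_fTri hB hC] at hp
    simp only [Finset.mem_coe, mem_Icc]
    refine ⟨hp.2.1, (Nat.le_div_iff_mul_le (by omega : 0 < C)).2 ?_⟩
    have h1 := hp.1
    have h3 := hp.2.2
    have h5 : B ≤ B * p.1 := Nat.le_mul_of_pos_right B (by omega)
    have : p.2 * C = C * p.2 := mul_comm _ _
    omega

lemma sum_Icc_id_real (Λ : ℕ) : ∑ l ∈ Finset.Icc 1 Λ, (l : ℝ) = Λ * (Λ + 1) / 2 := by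
  induction Λ with
  | zero => simp
  | succ k ih =>
    rw [Finset.sum_Icc_succ_top (by omega), ih]
    push_cast
    ring

lemma fTri_card_le (B C m : ℕ) (hB : 1 ≤ B) (hC : 1 ≤ C) :
    ((fTri B C m).card : ℝ) ≤ (m:ℝ)^2 / (2*B*C) := by
  have hBpos : (0:ℝ) < B := by exact_mod_cast hB
  have hCpos : (0:ℝ) < C := by exact_mod_cast hC
  set Λ := (m - B)/C with hΛdef
  have hCΛn : Λ * C ≤ m := le_trans (Nat.div_mul_le_self _ _) (Nat.sub_le _ _)
  have hCΛ : (Λ:ℝ) * C ≤ m := by exact_mod_cast hCΛn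
  have hcast : ((fTri B C m).card : ℝ) ≤ ∑ l ∈ Finset.Icc 1 Λ, ((m:ℝ) - C*l)/B := by
    rw [fTri_card B C m hB hC]
    push_cast
    refine Finset.sum_le_sum (fun l hl => ?_)
    refine le_trans (Nat.cast_div_le) ?_
    gcongr
    · simp only [mem_Icc] at hl
      have h := (Nat.le_div_iff_mul_le (by omega : 0 < C)).1 hl.2
      have h2 : C * l ≤ m := by
        have : l * C = C * l := mul_comm _ _
        omega
      have heq : ((m - C*l : ℕ):ℝ) = (m:ℝ) - C*l := by
        rw [Nat.cast_sub h2]; push_cast; ring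
      exact le_of_eq heq
  have hsum : ∑ l ∈ Finset.Icc 1 Λ, ((m:ℝ) - C*l)/B
      = ((Λ:ℝ)*m - C*(Λ*(Λ+1)/2))/B := by
    rw [← Finset.sum_div]
    rw [show ∑ l ∈ Finset.Icc 1 Λ, (((m:ℝ) - C*l)) = Λ*m - C*(Λ*(Λ+1)/2) from ?_]
    rw [Finset.sum_sub_distrib, Finset.sum_const, Nat.card_Icc, ← Finset.mul_sum,
      sum_Icc_id_real]
    push_cast
    ring
  refine le_trans hcast ?_
  rw [hsum, div_le_div_iff₀ (by positivity) (by positivity)]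
  have key : (0:ℝ) ≤ (B:ℝ) * (((m:ℝ) - C*Λ)^2 + C^2*Λ) := by positivity
  nlinarith [key]

lemma fTri_card_ge (B C m : ℕ) (hB : 1 ≤ B) (hC : 1 ≤ C) (hm : B + C ≤ m) :
    ((m:ℝ) - B) * ((m:ℝ) - B - C) / (2*B*C) ≤ ((fTri B C m).card : ℝ) := by
  have hBpos : (0:ℝ) < B := by exact_mod_cast hB
  have hCpos : (0:ℝ) < C := by exact_mod_cast hC
  set Λ := (m - B)/C with hΛdef
  have hBm : B ≤ m := by omega
  have hsubcast : ((m - B : ℕ):ℝ) = (m:ℝ) - B := Nat.cast_sub hBm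
  have hCΛn : Λ * C ≤ m - B := Nat.div_mul_le_self _ _
  have hCΛ : (Λ:ℝ) * C ≤ (m:ℝ) - B := by
    rw [← hsubcast]; exact_mod_cast hCΛn
  have hup : (m:ℝ) - B < C * (Λ + 1) := by
    have h := Nat.lt_mul_div_succ (m - B) (by omega : 0 < C)
    rw [← hsubcast]
    exact_mod_cast h
  have hcast : ∑ l ∈ Finset.Icc 1 Λ, ((m:ℝ) - B - C*l)/B ≤ ((fTri B C m).card : ℝ) := by
    rw [fTri_card B C m hB hC]
    push_cast
    refine Finset.sum_le_sum (fun l hl => ?_)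
    simp only [mem_Icc] at hl
    have h := (Nat.le_div_iff_mul_le (by omega : 0 < C)).1 hl.2
    have hClm : C * l ≤ m - B := by
      have : l * C = C * l := mul_comm _ _
      omega
    have hlt := Nat.lt_mul_div_succ (m - C*l) (by omega : 0 < B)
    have hltR : ((m - C*l : ℕ):ℝ) < B * (((m - C*l)/B : ℕ) + 1) := by exact_mod_cast hlt
    have hsub2 : ((m - C*l : ℕ):ℝ) = (m:ℝ) - C*l := by
      rw [Nat.cast_sub (by omega)]; push_cast; ring
    rw [div_le_iff₀ hBpos]
    rw [hsub2] at hltR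
    nlinarith [hltR]
  refine le_trans ?_ hcast
  have hsum : ∑ l ∈ Finset.Icc 1 Λ, ((m:ℝ) - B - C*l)/B
      = ((Λ:ℝ)*((m:ℝ)-B) - C*(Λ*(Λ+1)/2))/B := by
    rw [← Finset.sum_div]
    rw [show ∑ l ∈ Finset.Icc 1 Λ, (((m:ℝ) - B - C*l)) = Λ*((m:ℝ)-B) - C*(Λ*(Λ+1)/2) from ?_]
    rw [Finset.sum_sub_distrib, Finset.sum_const, Nat.card_Icc, ← Finset.mul_sum,
      sum_Icc_id_real]
    push_cast
    ring
  rw [hsum, div_le_div_iff₀ (by positivity) (by positivity)]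
  have hfact : (0:ℝ) ≤ (((m:ℝ) - B) - C*Λ) * (C*Λ + C - ((m:ℝ) - B)) := by
    refine mul_nonneg (by nlinarith) (by nlinarith)
  nlinarith [hfact, hBpos.le, hCpos.le]


lemma sum_inv_sq_le (D : ℕ) (hD : 4 ≤ D) :
    ∑ d ∈ Finset.Icc 2 D, ((d:ℝ)^2)⁻¹ ≤ 31/48 - ((D:ℝ) + 1/2)⁻¹ := by
  induction D with
  | zero => omega
  | succ k ih =>
    rcases Nat.lt_or_ge k 4 with hk | hk
    · have hk3 : k = 3 := by omega
      subst hk3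
      rw [show Finset.Icc 2 (3+1) = {2, 3, 4} from rfl]
      norm_num
    · rw [Finset.sum_Icc_succ_top (by omega)]
      have hkR : (4:ℝ) ≤ (k:ℝ) := by exact_mod_cast hk
      have e1 : ((k:ℝ)+1/2)⁻¹ - ((k:ℝ)+3/2)⁻¹ = (((k:ℝ)+1/2)*((k:ℝ)+3/2))⁻¹ := by
        rw [inv_sub_inv (by positivity) (by positivity)]
        norm_num
      have h1 : ((((k+1:ℕ)):ℝ)^2)⁻¹ ≤ ((k:ℝ)+1/2)⁻¹ - ((k:ℝ)+3/2)⁻¹ := by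
        rw [e1]
        push_cast
        apply inv_anti₀ (by positivity) (by nlinarith)
      have h2 := ih hk
      push_cast
      push_cast at h1 h2
      rw [show ((k:ℝ)+1+1/2) = (k:ℝ)+3/2 from by ring]
      linarith

lemma fBad_card_le (B C n d : ℕ) (hB : 1 ≤ B) (hC : 1 ≤ C) (hd : 0 < d) :
    ((fTri B C n).filter (fun p => d ∣ p.1 ∧ d ∣ p.2)).card ≤ (fTri B C (n/d)).card := by
  apply Finset.card_le_card_of_injOn (fun p => (p.1/d, p.2/d))
  · intro p hp
    simp only [Finset.mem_coe, mem_filter, mem_fTri hB hC] at hp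
    obtain ⟨⟨h1, h2, h3⟩, hd1, hd2⟩ := hp
    rw [Finset.mem_coe, mem_fTri hB hC]
    refine ⟨?_, ?_, ?_⟩
    · exact Nat.one_le_div_iff (by omega) |>.2 (Nat.le_of_dvd (by omega) hd1)
    · exact Nat.one_le_div_iff (by omega) |>.2 (Nat.le_of_dvd (by omega) hd2)
    · rw [Nat.le_div_iff_mul_le hd]
      calc (B * (p.1/d) + C * (p.2/d)) * d
          = B * (p.1/d * d) + C * (p.2/d * d) := by ring
        _ = B * p.1 + C * p.2 := by
            rw [Nat.div_mul_cancel hd1, Nat.div_mul_cancel hd2]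
        _ ≤ n := h3
  · intro p hp q hq hpq
    simp only [Finset.coe_filter, Set.mem_setOf_eq, mem_fTri hB hC] at hp hq
    simp only [Prod.mk.injEq] at hpq
    have h1 : p.1/d * d = q.1/d * d := by rw [hpq.1]
    have h2 : p.2/d * d = q.2/d * d := by rw [hpq.2]
    rw [Nat.div_mul_cancel hp.2.1, Nat.div_mul_cancel hq.2.1] at h1
    rw [Nat.div_mul_cancel hp.2.2, Nat.div_mul_cancel hq.2.2] at h2
    exact Prod.ext h1 h2

set_option maxHeartbeats 1000000 in
lemma coprime_count (B C n : ℕ) (hB : 1 ≤ B) (hC : 1 ≤ C) (hB3 : B^3 ≤ n)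
    (hC3 : C^3 ≤ n) (hn : 64 ≤ n) :
    (n:ℝ)/2 - 1 < (((fTri B C n).filter (fun p => Nat.Coprime p.1 p.2)).card : ℝ) := by
  -- basic size facts
  have hn2 : 4096 ≤ n^2 := by
    calc 4096 = 64*64 := by norm_num
      _ ≤ n*n := Nat.mul_le_mul hn hn
      _ = n^2 := by ring
  have h16B : 16 * B ≤ n := by
    have hcube : (16*B)^3 ≤ n^3 := by
      calc (16*B)^3 = 4096*B^3 := by ring
        _ ≤ 4096*n := Nat.mul_le_mul_left _ hB3
        _ ≤ n^2*n := Nat.mul_le_mul_right _ hn2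
        _ = n^3 := by ring
    exact le_of_pow_le_pow_left₀ (by norm_num) (by positivity) hcube
  have h16C : 16 * C ≤ n := by
    have hcube : (16*C)^3 ≤ n^3 := by
      calc (16*C)^3 = 4096*C^3 := by ring
        _ ≤ 4096*n := Nat.mul_le_mul_left _ hC3
        _ ≤ n^2*n := Nat.mul_le_mul_right _ hn2
        _ = n^3 := by ring
    exact le_of_pow_le_pow_left₀ (by norm_num) (by positivity) hcube
  have h4BC : 4 * (B * C) ≤ n := by
    have hcube : (4*(B*C))^3 ≤ n^3 := by
      calc (4*(B*C))^3 = 64*(B^3*C^3) := by ring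
        _ ≤ 64*(n*n) := Nat.mul_le_mul_left _ (Nat.mul_le_mul hB3 hC3)
        _ ≤ n*(n*n) := Nat.mul_le_mul_right _ hn
        _ = n^3 := by ring
    exact le_of_pow_le_pow_left₀ (by norm_num) (by positivity) hcube
  set s := B + C with hs
  have hspos : 0 < s := by omega
  set D := n / s with hD
  have hD8 : 8 ≤ D := (Nat.le_div_iff_mul_le hspos).2 (by omega)
  set T := fTri B C n with hT
  set P := T.filter (fun p => Nat.Coprime p.1 p.2) with hP
  -- union bound
  have hsubset : T \ P ⊆ (Finset.Icc 2 D).biUnion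
      (fun d => T.filter (fun p => d ∣ p.1 ∧ d ∣ p.2)) := by
    intro p hp
    rw [Finset.mem_sdiff] at hp
    obtain ⟨hpT, hpP⟩ := hp
    have hmem := (mem_fTri hB hC).1 hpT
    have hnc : Nat.gcd p.1 p.2 ≠ 1 := fun h => hpP (Finset.mem_filter.2 ⟨hpT, h⟩)
    have hg0 : Nat.gcd p.1 p.2 ≠ 0 := by
      intro h
      rw [Nat.gcd_eq_zero_iff] at h
      omega
    have hg2 : 2 ≤ Nat.gcd p.1 p.2 := by omega
    have hgp1 : Nat.gcd p.1 p.2 ≤ p.1 := Nat.gcd_le_left _ (by omega)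
    have hgp2 : Nat.gcd p.1 p.2 ≤ p.2 := Nat.gcd_le_right _ (by omega)
    have hgD : Nat.gcd p.1 p.2 ≤ D := by
      rw [hD, Nat.le_div_iff_mul_le hspos]
      calc Nat.gcd p.1 p.2 * s = B * Nat.gcd p.1 p.2 + C * Nat.gcd p.1 p.2 := by
            rw [hs]; ring
        _ ≤ B * p.1 + C * p.2 :=
            Nat.add_le_add (Nat.mul_le_mul_left _ hgp1) (Nat.mul_le_mul_left _ hgp2)
        _ ≤ n := hmem.2.2
    exact Finset.mem_biUnion.2 ⟨Nat.gcd p.1 p.2, Finset.mem_Icc.2 ⟨hg2, hgD⟩,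
      Finset.mem_filter.2 ⟨hpT, Nat.gcd_dvd_left _ _, Nat.gcd_dvd_right _ _⟩⟩
  have hcards : T.card ≤ P.card + ∑ d ∈ Finset.Icc 2 D, (fTri B C (n/d)).card := by
    have h1 : (T \ P).card = T.card - P.card :=
      Finset.card_sdiff_of_subset (Finset.filter_subset _ _)
    have h2 : P.card ≤ T.card := Finset.card_le_card (Finset.filter_subset _ _)
    have h3 : (T \ P).card ≤ ∑ d ∈ Finset.Icc 2 D, (fTri B C (n/d)).card := by
      refine le_trans (Finset.card_le_card hsubset) ?_
      refine le_trans (Finset.card_biUnion_le) ?_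
      exact Finset.sum_le_sum (fun d hd => fBad_card_le B C n d hB hC
        (by simp only [Finset.mem_Icc] at hd; omega))
    omega
  -- real estimates
  have hBpos : (0:ℝ) < B := by exact_mod_cast hB
  have hCpos : (0:ℝ) < C := by exact_mod_cast hC
  set x := 2*(B:ℝ)*C with hx
  have hxpos : (0:ℝ) < x := by positivity
  have hnR : (64:ℝ) ≤ n := by exact_mod_cast hn
  set invD := ((D:ℝ) + 1/2)⁻¹ with hinvD
  have hinvDpos : 0 < invD := by positivity
  have hsum_le : (∑ d ∈ Finset.Icc 2 D, ((fTri B C (n/d)).card : ℝ))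
      ≤ ((n:ℝ)^2 * (31/48 - invD)) / x := by
    have hstep : (∑ d ∈ Finset.Icc 2 D, ((fTri B C (n/d)).card : ℝ))
        ≤ ∑ d ∈ Finset.Icc 2 D, ((n:ℝ)^2/x) * ((d:ℝ)^2)⁻¹ := by
      refine Finset.sum_le_sum (fun d hd => ?_)
      simp only [Finset.mem_Icc] at hd
      have hdpos : (0:ℝ) < d := by exact_mod_cast (by omega : 0 < d)
      calc ((fTri B C (n/d)).card : ℝ) ≤ ((n/d : ℕ):ℝ)^2 / (2*(B:ℝ)*C) :=
            fTri_card_le B C (n/d) hB hC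
        _ ≤ ((n:ℝ)^2 * ((d:ℝ)^2)⁻¹) / (2*(B:ℝ)*C) := by
            gcongr
            calc ((n/d : ℕ):ℝ)^2 ≤ ((n:ℝ)/d)^2 :=
                  pow_le_pow_left₀ (by positivity) Nat.cast_div_le 2
              _ = (n:ℝ)^2 * ((d:ℝ)^2)⁻¹ := by
                  rw [div_pow, div_eq_mul_inv]
        _ = ((n:ℝ)^2/x) * ((d:ℝ)^2)⁻¹ := by rw [hx]; ring
    refine le_trans hstep ?_
    rw [← Finset.mul_sum]
    have hσ := sum_inv_sq_le D (by omega)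
    calc ((n:ℝ)^2/x) * (∑ d ∈ Finset.Icc 2 D, ((d:ℝ)^2)⁻¹)
        ≤ ((n:ℝ)^2/x) * (31/48 - invD) := by
          apply mul_le_mul_of_nonneg_left _ (by positivity)
          rw [hinvD]
          exact hσ
      _ = ((n:ℝ)^2 * (31/48 - invD)) / x := by ring
  have hTlow : ((n:ℝ) - B) * ((n:ℝ) - B - C) / x ≤ (T.card : ℝ) := by
    rw [hx]
    exact fTri_card_ge B C n hB hC (by omega)
  have htail : (n:ℝ)*s - (s:ℝ)^2/2 ≤ (n:ℝ)^2 * invD := by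
    have hsR : (0:ℝ) < (s:ℝ) := by exact_mod_cast hspos
    have hDle : (D:ℝ) ≤ (n:ℝ)/(s:ℝ) := Nat.cast_div_le
    have h1 : invD ≥ (2*(s:ℝ))/(2*(n:ℝ)+s) := by
      rw [hinvD, ge_iff_le]
      rw [show (2*(s:ℝ))/(2*(n:ℝ)+s) = ((2*(n:ℝ)+s)/(2*s))⁻¹ from by
        rw [← one_div, one_div_div]]
      apply inv_anti₀ (by positivity)
      calc (D:ℝ) + 1/2 ≤ (n:ℝ)/s + 1/2 := by linarith
        _ = (2*(n:ℝ)+s)/(2*s) := by field_simp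
    calc (n:ℝ)*s - (s:ℝ)^2/2 ≤ (n:ℝ)^2 * ((2*(s:ℝ))/(2*(n:ℝ)+s)) := by
          rw [show (n:ℝ)^2 * ((2*(s:ℝ))/(2*(n:ℝ)+s)) = ((n:ℝ)^2*(2*(s:ℝ)))/(2*(n:ℝ)+s) from by
            ring]
          rw [le_div_iff₀ (by positivity)]
          nlinarith [pow_pos hsR 3, sq_nonneg ((s:ℝ))]
      _ ≤ (n:ℝ)^2 * invD := by
          apply mul_le_mul_of_nonneg_left h1 (by positivity)
  -- combine
  have hTP : (T.card : ℝ) ≤ (P.card : ℝ) + ∑ d ∈ Finset.Icc 2 D, ((fTri B C (n/d)).card : ℝ) := by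
    have := hcards
    push_cast
    exact_mod_cast this
  have hPlow : (((n:ℝ) - B) * ((n:ℝ) - B - C) - (n:ℝ)^2 * (31/48 - invD)) / x
      ≤ (P.card : ℝ) := by
    rw [sub_div]
    linarith [hTlow, hsum_le, hTP]
  have hnum : ((n:ℝ)*s - (s:ℝ)^2/2 + (((n:ℝ) - B) * ((n:ℝ) - B - C) - (n:ℝ)^2 * (31/48))) / x
      ≤ (P.card : ℝ) := by
    refine le_trans ?_ hPlow
    gcongr
    linarith [htail]
  have h16BR : (16:ℝ)*B ≤ n := by exact_mod_cast h16B
  have h16CR : (16:ℝ)*C ≤ n := by exact_mod_cast h16C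
  have h4BCR : (4:ℝ)*((B:ℝ)*C) ≤ n := by exact_mod_cast h4BC
  have hsR : (s:ℝ) = (B:ℝ) + C := by rw [hs]; push_cast; ring
  refine lt_of_lt_of_le ?_ hnum
  rw [lt_div_iff₀ hxpos, hx, hsR]
  have hint1 : (n:ℝ)*((16:ℝ)*B) ≤ (n:ℝ)*n :=
    mul_le_mul_of_nonneg_left h16BR (by positivity)
  have hint2 : (n:ℝ)*((4:ℝ)*((B:ℝ)*C)) ≤ (n:ℝ)*n :=
    mul_le_mul_of_nonneg_left h4BCR (by positivity)
  have hint3 : ((16:ℝ)*C)*((16:ℝ)*C) ≤ (n:ℝ)*n :=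
    mul_le_mul h16CR h16CR (by positivity) (by positivity)
  nlinarith [hint1, hint2, hint3, sq_nonneg ((B:ℝ)), mul_pos hBpos hCpos]


set_option maxHeartbeats 3200000 in
/-- If `n ≥ 64` and `a_i/b_i`, `a_j/b_j` (with `i < j`) are two fractions in the Farey
sequence of order `n` whose denominators are both at most `n^{1/3}`, then `j − i > n/2`. -/
theorem farey_far_apart_of_both_denominators_small (n : ℕ) (hn : 64 ≤ n)
    (i j : Fin (fareyList n).length) (hij : i < j)
    (hi : ((((fareyList n).get i).den : ℝ)) ≤ (n : ℝ) ^ ((1 : ℝ) / 3))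
    (hj : ((((fareyList n).get j).den : ℝ)) ≤ (n : ℝ) ^ ((1 : ℝ) / 3)) :
    (n : ℝ) / 2 < ((j : ℕ) : ℝ) - ((i : ℕ) : ℝ) := by
  classical
  have hsorted : (fareyList n).SortedLT := Finset.sortedLT_sort _
  have hmono : StrictMono (fareyList n).get := hsorted.strictMono_get
  set q : ℚ := (fareyList n).get i with hqdef
  set q' : ℚ := (fareyList n).get j with hq'def
  have hqq' : q < q' := hmono hij
  have hqmem : q ∈ fareySet n := by
    rw [hqdef]
    exact (Finset.mem_sort _).1 ((fareyList n).get_mem i)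
  have hq'mem : q' ∈ fareySet n := by
    rw [hq'def]
    exact (Finset.mem_sort _).1 ((fareyList n).get_mem j)
  obtain ⟨hq0, hq1, hqden⟩ := (Finset.mem_filter.1 hqmem).2
  obtain ⟨hq'0, hq'1, hq'den⟩ := (Finset.mem_filter.1 hq'mem).2
  -- notation
  set A : ℤ := q.num with hA
  set A' : ℤ := q'.num with hA'
  set B : ℕ := q.den with hB
  set C : ℕ := q'.den with hC
  have hB1 : 1 ≤ B := q.pos
  have hC1 : 1 ≤ C := q'.pos
  -- cube bounds
  have hcube : ∀ d : ℕ, ((d:ℝ) ≤ (n:ℝ) ^ ((1:ℝ)/3)) → d^3 ≤ n := by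
    intro d hd
    have h3 : ((d:ℝ))^(3:ℕ) ≤ ((n:ℝ) ^ ((1:ℝ)/3))^(3:ℕ) :=
      pow_le_pow_left₀ (by positivity) hd 3
    have heq : ((n:ℝ) ^ ((1:ℝ)/3))^(3:ℕ) = (n:ℝ) := by
      rw [← Real.rpow_natCast ((n:ℝ) ^ ((1:ℝ)/3)) 3, ← Real.rpow_mul (Nat.cast_nonneg n)]
      norm_num
    rw [heq] at h3
    exact_mod_cast h3
  have hB3 : B^3 ≤ n := hcube B hi
  have hC3 : C^3 ≤ n := hcube C hj
  -- numerator facts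
  have hA0 : 0 ≤ A := Rat.num_nonneg.2 hq0
  have hA'0 : 0 ≤ A' := Rat.num_nonneg.2 hq'0
  have hAB : A ≤ (B:ℤ) := by
    have h := (Rat.le_iff _ _).1 hq1
    simpa using h
  have hA'C : A' ≤ (C:ℤ) := by
    have h := (Rat.le_iff _ _).1 hq'1
    simpa using h
  have hdet : A * C < A' * B := (Rat.lt_iff _ _).1 hqq'
  -- the map
  set f : ℕ × ℕ → ℚ :=
    fun p => ((A * p.1 + A' * p.2 : ℤ) : ℚ) / ((B * p.1 + C * p.2 : ℕ) : ℚ) with hf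
  set S := (fareySet n).filter (fun r => q < r ∧ r < q') with hS
  set PP := (fTri B C n).filter (fun p => Nat.Coprime p.1 p.2) with hPP
  -- facts about members of PP
  have hmemPP : ∀ p ∈ PP, (1 ≤ p.1 ∧ 1 ≤ p.2 ∧ B*p.1 + C*p.2 ≤ n) ∧ Nat.Coprime p.1 p.2 := by
    intro p hp
    have h := Finset.mem_filter.1 hp
    exact ⟨(mem_fTri hB1 hC1).1 h.1, h.2⟩
  have hdenpos : ∀ p : ℕ × ℕ, 1 ≤ p.1 → (0:ℚ) < ((B * p.1 + C * p.2 : ℕ) : ℚ) := by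
    intro p hp1
    have : 0 < B * p.1 + C * p.2 := by positivity
    exact_mod_cast this
  have hqlt : ∀ p : ℕ × ℕ, 1 ≤ p.1 → 1 ≤ p.2 → q < f p := by
    intro p hp1 hp2
    have hden := hdenpos p hp1
    rw [hf]
    rw [lt_div_iff₀ hden, ← Rat.num_div_den q, div_mul_eq_mul_div,
      div_lt_iff₀ (by exact_mod_cast q.pos : (0:ℚ) < (q.den:ℚ))]
    have hZ : A * ((B:ℤ) * p.1 + C * p.2) < (A * p.1 + A' * p.2) * B := by
      have hl : (1:ℤ) ≤ (p.2:ℤ) := by exact_mod_cast hp2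
      nlinarith [mul_lt_mul_of_pos_right hdet (by omega : (0:ℤ) < (p.2:ℤ))]
    show (q.num : ℚ) * ((B * p.1 + C * p.2 : ℕ) : ℚ) < ((A * p.1 + A' * p.2 : ℤ) : ℚ) * (q.den : ℚ)
    rw [← hA, ← hB]
    exact_mod_cast hZ
  have hltq' : ∀ p : ℕ × ℕ, 1 ≤ p.1 → 1 ≤ p.2 → f p < q' := by
    intro p hp1 hp2
    have hden := hdenpos p hp1
    rw [hf]
    rw [div_lt_iff₀ hden, ← Rat.num_div_den q', div_mul_eq_mul_div,
      lt_div_iff₀ (by exact_mod_cast q'.pos : (0:ℚ) < (q'.den:ℚ))]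
    have hZ : (A * p.1 + A' * p.2) * C < A' * ((B:ℤ) * p.1 + C * p.2) := by
      nlinarith [mul_lt_mul_of_pos_right hdet (by omega : (0:ℤ) < (p.1:ℤ))]
    show ((A * p.1 + A' * p.2 : ℤ) : ℚ) * (q'.den : ℚ) < (q'.num : ℚ) * ((B * p.1 + C * p.2 : ℕ) : ℚ)
    rw [← hA', ← hC]
    exact_mod_cast hZ
  have hfS : ∀ p ∈ PP, f p ∈ S := by
    intro p hp
    obtain ⟨⟨hp1, hp2, hple⟩, _⟩ := hmemPP p hp
    have hden := hdenpos p hp1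
    have hkey1 := hqlt p hp1 hp2
    have hkey2 := hltq' p hp1 hp2
    have hnum0 : (0:ℤ) ≤ A * p.1 + A' * p.2 := by positivity
    rw [hS, Finset.mem_filter]
    refine ⟨?_, hkey1, hkey2⟩
    rw [fareySet, Finset.mem_filter]
    constructor
    · rw [Finset.mem_image]
      refine ⟨(A.toNat * p.1 + A'.toNat * p.2, B * p.1 + C * p.2), ?_, ?_⟩
      · rw [Finset.mem_product, Finset.mem_range, Finset.mem_range]
        have h1 : A.toNat ≤ B := by omega
        have h2 : A'.toNat ≤ C := by omega
        constructor
        · have : A.toNat * p.1 + A'.toNat * p.2 ≤ B * p.1 + C * p.2 :=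
            Nat.add_le_add (Nat.mul_le_mul_right _ h1) (Nat.mul_le_mul_right _ h2)
          omega
        · omega
      · show ((A.toNat * p.1 + A'.toNat * p.2 : ℕ) : ℚ) / ((B * p.1 + C * p.2 : ℕ) : ℚ) = f p
        rw [hf]
        congr 1
        have hAt : ((A.toNat:ℕ):ℚ) = ((A:ℤ):ℚ) := by
          rw [← Int.cast_natCast, Int.toNat_of_nonneg hA0]
        have hA't : ((A'.toNat:ℕ):ℚ) = ((A':ℤ):ℚ) := by
          rw [← Int.cast_natCast, Int.toNat_of_nonneg hA'0]
        push_cast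
        rw [hAt, hA't]
    · refine ⟨?_, ?_, ?_⟩
      · rw [hf]
        apply div_nonneg _ hden.le
        exact_mod_cast hnum0
      · exact le_of_lt (lt_of_lt_of_le hkey2 hq'1)
      · -- denominator bound
        have hfp : f p = Rat.divInt (A * p.1 + A' * p.2) ((B * p.1 + C * p.2 : ℕ) : ℤ) := by
          rw [hf, Rat.divInt_eq_div]
          norm_num
        have hdvd : ((f p).den : ℤ) ∣ ((B * p.1 + C * p.2 : ℕ) : ℤ) := by
          rw [hfp]
          exact Rat.den_dvd _ _
        have hle : ((f p).den : ℤ) ≤ ((B * p.1 + C * p.2 : ℕ) : ℤ) := by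
          apply Int.le_of_dvd _ hdvd
          exact_mod_cast (by positivity : 0 < B * p.1 + C * p.2)
        have : (f p).den ≤ B * p.1 + C * p.2 := by exact_mod_cast hle
        omega
  have hfinj : Set.InjOn f (PP : Set (ℕ × ℕ)) := by
    intro p hp p' hp' hfeq
    obtain ⟨⟨hp1, hp2, hple⟩, hcop⟩ := hmemPP p (by simpa using hp)
    obtain ⟨⟨hp1', hp2', hple'⟩, hcop'⟩ := hmemPP p' (by simpa using hp')
    have hden := hdenpos p hp1
    have hden' := hdenpos p' hp1'
    rw [hf] at hfeq
    have hcross := (div_eq_div_iff hden.ne' hden'.ne').1 hfeq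
    have hcrossZ : (A * p.1 + A' * p.2) * ((B:ℤ) * p'.1 + C * p'.2)
        = (A * p'.1 + A' * p'.2) * ((B:ℤ) * p.1 + C * p.2) := by
      exact_mod_cast hcross
    have hkey : (A*C - A'*B) * ((p.1:ℤ)*p'.2 - (p'.1:ℤ)*p.2) = 0 := by
      linear_combination hcrossZ
    have hne : A*C - A'*(B:ℤ) ≠ 0 := sub_ne_zero.2 (ne_of_lt hdet)
    have h2 : (p.1:ℤ)*p'.2 = (p'.1:ℤ)*p.2 := by
      rcases mul_eq_zero.1 hkey with h | h
      · exact absurd h hne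
      · linarith [sub_eq_zero.1 h]
    have h3 : p.1 * p'.2 = p'.1 * p.2 := by exact_mod_cast h2
    have hd1 : p.1 ∣ p'.1 := by
      apply hcop.dvd_of_dvd_mul_right
      rw [← h3]
      exact dvd_mul_right _ _
    have hd2 : p'.1 ∣ p.1 := by
      apply hcop'.dvd_of_dvd_mul_right
      rw [h3]
      exact dvd_mul_right _ _
    have he1 : p.1 = p'.1 := Nat.dvd_antisymm hd1 hd2
    have he2 : p.2 = p'.2 := by
      rw [he1] at h3
      exact (Nat.eq_of_mul_eq_mul_left (by omega) (by omega : p'.1 * p.2 = p'.1 * p'.2)).symm ▸ by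
        omega
    exact Prod.ext he1 he2
  have hcard1 : PP.card ≤ S.card := Finset.card_le_card_of_injOn f hfS hfinj
  -- S to index interval
  have hcard2 : S.card ≤ (j:ℕ) - (i:ℕ) - 1 := by
    rw [← Nat.card_Ioo]
    apply Finset.card_le_card_of_injOn (fun r => (fareyList n).idxOf r)
    · intro r hr
      rw [hS, Finset.mem_coe, Finset.mem_filter] at hr
      obtain ⟨hrF, hql, hrq'⟩ := hr
      have hmemL : r ∈ fareyList n := (Finset.mem_sort _).2 hrF
      have hlen : (fareyList n).idxOf r < (fareyList n).length :=
        List.idxOf_lt_length_iff.2 hmemL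
      have hgetk : (fareyList n).get ⟨(fareyList n).idxOf r, hlen⟩ = r :=
        List.idxOf_get hlen
      rw [Finset.mem_coe, Finset.mem_Ioo]
      constructor
      · have : i < (⟨(fareyList n).idxOf r, hlen⟩ : Fin (fareyList n).length) := by
          apply hmono.lt_iff_lt.1
          rw [hgetk, ← hqdef]
          exact hql
        exact this
      · have : (⟨(fareyList n).idxOf r, hlen⟩ : Fin (fareyList n).length) < j := by
          apply hmono.lt_iff_lt.1
          rw [hgetk, ← hq'def]
          exact hrq'
        exact this
    · intro r hr r' hr' heq
      have hrF : r ∈ fareySet n := (Finset.mem_filter.1 (Finset.mem_coe.1 (by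
        rw [hS] at hr; exact hr))).1
      have hrF' : r' ∈ fareySet n := (Finset.mem_filter.1 (Finset.mem_coe.1 (by
        rw [hS] at hr'; exact hr'))).1
      have hmemL : r ∈ fareyList n := (Finset.mem_sort _).2 hrF
      have hmemL' : r' ∈ fareyList n := (Finset.mem_sort _).2 hrF'
      have hlen : (fareyList n).idxOf r < (fareyList n).length :=
        List.idxOf_lt_length_iff.2 hmemL
      have hlen' : (fareyList n).idxOf r' < (fareyList n).length :=
        List.idxOf_lt_length_iff.2 hmemL'
      have h1 : (fareyList n).get ⟨(fareyList n).idxOf r, hlen⟩ = r :=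
        List.idxOf_get hlen
      have h2 : (fareyList n).get ⟨(fareyList n).idxOf r', hlen'⟩ = r' :=
        List.idxOf_get hlen'
      rw [← h1, ← h2]
      congr 1
      exact Fin.ext heq
  -- counting lower bound
  have hcount := coprime_count B C n hB1 hC1 hB3 hC3 hn
  rw [← hPP] at hcount
  -- finish
  have hijn : (i:ℕ) < (j:ℕ) := hij
  have hfin : (n:ℝ)/2 - 1 < (((j:ℕ) - (i:ℕ) - 1 : ℕ) : ℝ) := by
    refine lt_of_lt_of_le hcount ?_
    exact_mod_cast le_trans hcard1 hcard2
  have hcast : (((j:ℕ) - (i:ℕ) - 1 : ℕ) : ℝ) = ((j:ℕ):ℝ) - ((i:ℕ):ℝ) - 1 := by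
    have h1 : (i:ℕ) + 1 ≤ (j:ℕ) := hijn
    push_cast [Nat.cast_sub (by omega : 1 ≤ (j:ℕ) - (i:ℕ)), Nat.cast_sub (le_of_lt hijn)]
    ring
  rw [hcast] at hfin
  linarith
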